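/- Let u_1,...,u_n ∈ ℝ³ be an embedding of a graph G with no vertex at the origin, let α be an affine plane not containing the origin and not parallel to any vector u_i, and let p_i = λ_i u_i ∈ α be the central projection of u_i onto α. Then the map sending a CDV matrix M of (u_i) to the edge-function ω with ω_{ij} = M_{ij}/(λ_i λ_j) for (i,j) ∈ E(G) is a linear isomorphism between the vector space of CDV matrices of (u_i) and the vector space of equilibrium stresses of the flat embedding (p_i). -/

import Mathlib

open Finset

/-- A CDV matrix for an embedding `u` of a graph `G` into `ℝ³`. -/
def IsCDV {n : ℕ} (G : SimpleGraph (Fin n)) (u : Fin n → Fin 3 → ℝ)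
    (M : Matrix (Fin n) (Fin n) ℝ) : Prop :=
  M.IsSymm ∧ (∀ i j : Fin n, i ≠ j → ¬ G.Adj i j → M i j = 0) ∧
    ∀ i : Fin n, ∑ j, M i j • u j = 0

/-- An equilibrium stress for an embedding `p` of `G`: a symmetric assignment
supported on the edges with `∑_j ω i j • (p j - p i) = 0` at every vertex. -/
def IsStress {n : ℕ} (G : SimpleGraph (Fin n)) (p : Fin n → Fin 3 → ℝ)
    (ω : Fin n → Fin n → ℝ) : Prop :=
  (∀ i j, ω i j = ω j i) ∧ (∀ i j, ¬ G.Adj i j → ω i j = 0) ∧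
    ∀ i : Fin n, ∑ j, ω i j • (p j - p i) = 0

/-- Let `u` be an embedding with no vertex at the origin, `α` the
plane `{x | ⟨a, x⟩ = 1}` (not through the origin, not parallel to any `u i`),
and `p i = λ i • u i ∈ α` the central projection.  Then
`M ↦ (ω i j = M i j / (λ i λ j)` on edges`)` is a linear isomorphism between
the space of CDV matrices of `u` and the space of equilibrium stresses of `p`:
it maps CDV matrices to equilibrium stresses, is linear, and every equilibrium
stress of `p` comes from a unique CDV matrix `M` with
`M i j = λ i λ j ω i j` on the edges. -/
theorem stmt4
    {n : ℕ} (G : SimpleGraph (Fin n)) [DecidableRel G.Adj]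
    (u p : Fin n → Fin 3 → ℝ)
    (hu : ∀ i, u i ≠ 0)
    (a : Fin 3 → ℝ) (ha : a ≠ 0)
    (hnotpar : ∀ i, ∑ k, a k * u i k ≠ 0)
    (lam : Fin n → ℝ)
    (hp : ∀ i, p i = lam i • u i)
    (hpmem : ∀ i, ∑ k, a k * p i k = 1)
    (T : Matrix (Fin n) (Fin n) ℝ → (Fin n → Fin n → ℝ))
    (hT : ∀ M i j, T M i j = if G.Adj i j then M i j / (lam i * lam j) else 0) :
    (∀ M, IsCDV G u M → IsStress G p (T M)) ∧
    (∀ (c : ℝ) (M N : Matrix (Fin n) (Fin n) ℝ) (i j : Fin n),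
      T (c • M + N) i j = c * T M i j + T N i j) ∧
    (∀ ω, IsStress G p ω →
      ∃! M : Matrix (Fin n) (Fin n) ℝ, IsCDV G u M ∧ T M = ω) := by
  classical
  have hpk : ∀ i k, p i k = lam i * u i k := fun i k => by rw [hp i]; simp
  have hS : ∀ i, lam i * ∑ k, a k * u i k = 1 := by
    intro i
    have h := hpmem i
    simp only [hpk] at h
    rw [Finset.mul_sum, ← h]
    exact Finset.sum_congr rfl fun k _ => by ring
  have hlam : ∀ i, lam i ≠ 0 := by
    intro i h
    have := hS i
    rw [h, zero_mul] at this
    exact one_ne_zero this.symm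
  have hinv : ∀ i, ∑ k, a k * u i k = (lam i)⁻¹ := by
    intro i
    have h := hS i
    rw [mul_comm] at h
    exact eq_inv_of_mul_eq_one_left h
  -- removing the diagonal entry from a sum
  have hdiag : ∀ (i : Fin n) (g : Fin n → ℝ),
      ∑ j, (if j = i then 0 else g j) = (∑ j, g j) - g i := by
    intro i g
    have : ∀ j, (if j = i then 0 else g j) = g j - (if j = i then g j else 0) := by
      intro j; split_ifs <;> ring
    rw [Finset.sum_congr rfl fun j _ => this j, Finset.sum_sub_distrib,
      Finset.sum_ite_eq' Finset.univ i g, if_pos (Finset.mem_univ i)]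
  -- the row relation for any matrix satisfying the CDV sum condition
  have hrow : ∀ (M : Matrix (Fin n) (Fin n) ℝ), (∀ i, ∑ j, M i j • u j = 0) →
      ∀ i, ∑ j, M i j * (lam j)⁻¹ = 0 := by
    intro M heq i
    have heqk : ∀ k, ∑ j, M i j * u j k = 0 := by
      intro k
      have := congrFun (heq i) k
      simpa using this
    calc ∑ j, M i j * (lam j)⁻¹ = ∑ j, ∑ k, M i j * (a k * u j k) := by
          refine Finset.sum_congr rfl fun j _ => ?_
          rw [← hinv j, Finset.mul_sum]
      _ = ∑ k, ∑ j, M i j * (a k * u j k) := Finset.sum_comm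
      _ = ∑ k, a k * ∑ j, M i j * u j k := by
          refine Finset.sum_congr rfl fun k _ => ?_
          rw [Finset.mul_sum]
          exact Finset.sum_congr rfl fun j _ => by ring
      _ = 0 := by simp [heqk]
  have fwd : ∀ M, IsCDV G u M → IsStress G p (T M) := by
    rintro M ⟨hsym, hsupp, heq⟩
    have heqk : ∀ i k, ∑ j, M i j * u j k = 0 := by
      intro i k
      have := congrFun (heq i) k
      simpa using this
    refine ⟨?_, ?_, ?_⟩
    · intro i j
      rw [hT, hT]
      by_cases h : G.Adj i j
      · rw [if_pos h, if_pos (G.adj_symm h), hsym.apply, mul_comm (lam j)]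
      · rw [if_neg h, if_neg (fun h' => h (G.adj_symm h'))]
    · intro i j h
      rw [hT, if_neg h]
    · intro i
      funext k
      simp only [Finset.sum_apply, Pi.smul_apply, Pi.sub_apply, smul_eq_mul, Pi.zero_apply]
      have key1 : ∀ j, T M i j * lam j = (if j = i then 0 else M i j) * (lam i)⁻¹ := by
        intro j
        rw [hT]
        by_cases h : G.Adj i j
        · rw [if_pos h, if_neg (fun h' => G.ne_of_adj h h'.symm)]
          field_simp [hlam i, hlam j]
        · rw [if_neg h]
          by_cases h2 : j = i
          · rw [if_pos h2]; ring
          · rw [if_neg h2, hsupp i j (fun h' => h2 h'.symm) h]; ring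
      have key2 : ∀ j, T M i j = (if j = i then 0 else M i j * (lam j)⁻¹) * (lam i)⁻¹ := by
        intro j
        rw [hT]
        by_cases h : G.Adj i j
        · rw [if_pos h, if_neg (fun h' => G.ne_of_adj h h'.symm)]
          rw [div_eq_mul_inv, mul_inv]
          ring
        · rw [if_neg h]
          by_cases h2 : j = i
          · rw [if_pos h2]; ring
          · rw [if_neg h2, hsupp i j (fun h' => h2 h'.symm) h]; ring
      have hA : ∑ j, T M i j * (lam j * u j k) = -(M i i * (lam i)⁻¹ * u i k) := by
        calc ∑ j, T M i j * (lam j * u j k)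
            = ∑ j, (if j = i then 0 else M i j * u j k) * (lam i)⁻¹ := by
              refine Finset.sum_congr rfl fun j _ => ?_
              rw [← mul_assoc, key1 j]
              split_ifs <;> ring
          _ = ((∑ j, M i j * u j k) - M i i * u i k) * (lam i)⁻¹ := by
              rw [← Finset.sum_mul, hdiag i (fun j => M i j * u j k)]
          _ = -(M i i * (lam i)⁻¹ * u i k) := by rw [heqk i k]; ring
      have hB : ∑ j, T M i j = -(M i i * (lam i)⁻¹ * (lam i)⁻¹) := by
        calc ∑ j, T M i j
            = ∑ j, (if j = i then 0 else M i j * (lam j)⁻¹) * (lam i)⁻¹ := by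
              exact Finset.sum_congr rfl fun j _ => key2 j
          _ = ((∑ j, M i j * (lam j)⁻¹) - M i i * (lam i)⁻¹) * (lam i)⁻¹ := by
              rw [← Finset.sum_mul, hdiag i (fun j => M i j * (lam j)⁻¹)]
          _ = -(M i i * (lam i)⁻¹ * (lam i)⁻¹) := by rw [hrow M heq i]; ring
      calc ∑ j, T M i j * (p j k - p i k)
          = ∑ j, (T M i j * (lam j * u j k) - T M i j * (lam i * u i k)) := by
            refine Finset.sum_congr rfl fun j _ => ?_
            rw [hpk, hpk]; ring
        _ = (∑ j, T M i j * (lam j * u j k)) - (∑ j, T M i j) * (lam i * u i k) := by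
            rw [Finset.sum_sub_distrib, Finset.sum_mul]
        _ = 0 := by
            rw [hA, hB]
            field_simp [hlam i]
            ring
  refine ⟨fwd, ?_, ?_⟩
  · intro c M N i j
    rw [hT, hT, hT]
    by_cases h : G.Adj i j
    · simp only [if_pos h, Matrix.add_apply, Matrix.smul_apply, smul_eq_mul]
      ring
    · simp [if_neg h]
  · rintro ω ⟨hωs, hωsupp, hωeq⟩
    have hωii : ∀ i, ω i i = 0 := fun i => hωsupp i i G.irrefl
    set M : Matrix (Fin n) (Fin n) ℝ :=
      fun i j => if i = j then -(lam i * lam i * ∑ l, ω i l) else lam i * lam j * ω i j with hM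
    have hMoff : ∀ i j, i ≠ j → M i j = lam i * lam j * ω i j := by
      intro i j h
      simp only [hM, if_neg h]
    have hωeqk : ∀ i k, ∑ j, ω i j * (lam j * u j k - lam i * u i k) = 0 := by
      intro i k
      have := congrFun (hωeq i) k
      simpa [hpk] using this
    have hMsum : ∀ i, ∑ j, M i j • u j = 0 := by
      intro i
      funext k
      simp only [Finset.sum_apply, Pi.smul_apply, smul_eq_mul, Pi.zero_apply]
      have step : ∀ j, M i j * u j k =
          lam i * (ω i j * (lam j * u j k - lam i * u i k)) +
          (if j = i then (-(lam i * lam i * ∑ l, ω i l) - ω i i * lam i * lam i)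
            * u i k else 0) + ω i j * lam i * lam i * u i k := by
        intro j
        by_cases h : j = i
        · subst h
          simp only [hM, eq_self_iff_true, if_true]
          ring
        · rw [hMoff i j (fun h' => h h'.symm), if_neg h]
          ring
      rw [Finset.sum_congr rfl fun j _ => step j]
      rw [Finset.sum_add_distrib, Finset.sum_add_distrib, ← Finset.mul_sum,
        hωeqk i k, Finset.sum_ite_eq' Finset.univ i, if_pos (Finset.mem_univ i),
        hωii i]
      have hsum : ∑ j, ω i j * lam i * lam i * u i k
          = (∑ j, ω i j) * (lam i * lam i * u i k) := by
        rw [Finset.sum_mul]; exact Finset.sum_congr rfl fun j _ => by ring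
      rw [hsum]
      ring
    have hMcdv : IsCDV G u M := by
      refine ⟨?_, ?_, hMsum⟩
      · rw [Matrix.IsSymm]
        ext i j
        rw [Matrix.transpose_apply]
        by_cases h : i = j
        · subst h; rfl
        · rw [hMoff j i (fun h' => h h'.symm), hMoff i j h, hωs]
          ring
      · intro i j hne hadj
        rw [hMoff i j hne, hωsupp i j hadj]
        ring
    have hTM : T M = ω := by
      funext i j
      rw [hT]
      by_cases h : G.Adj i j
      · rw [if_pos h, hMoff i j (G.ne_of_adj h)]
        exact mul_div_cancel_left₀ _ (mul_ne_zero (hlam i) (hlam j))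
      · rw [if_neg h, hωsupp i j h]
    refine ⟨M, ⟨hMcdv, hTM⟩, ?_⟩
    rintro N ⟨⟨hNsym, hNsupp, hNeq⟩, hTN⟩
    have hNoff : ∀ i j, i ≠ j → N i j = lam i * lam j * ω i j := by
      intro i j hne
      by_cases h : G.Adj i j
      · have := congrFun (congrFun hTN i) j
        rw [hT, if_pos h, div_eq_iff (mul_ne_zero (hlam i) (hlam j))] at this
        rw [this]
        ring
      · rw [hNsupp i j hne h, hωsupp i j h]
        ring
    ext i j
    by_cases h : i = j
    · subst h
      have hr := hrow N hNeq i
      have hsplit : ∀ j, N i j * (lam j)⁻¹ =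
          (if j = i then N i i * (lam i)⁻¹ - lam i * ω i i else 0) + lam i * ω i j := by
        intro j
        by_cases h2 : j = i
        · subst h2; rw [if_pos rfl]; ring
        · rw [if_neg h2, hNoff i j (fun h' => h2 h'.symm)]
          field_simp [hlam j]
          ring
      rw [Finset.sum_congr rfl fun j _ => hsplit j, Finset.sum_add_distrib,
        Finset.sum_ite_eq' Finset.univ i, if_pos (Finset.mem_univ i), hωii i,
        ← Finset.mul_sum] at hr
      simp only [mul_zero, sub_zero] at hr
      have hNi : N i i * (lam i)⁻¹ = -(lam i * ∑ l, ω i l) := by linarith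
      have h3 : N i i * (lam i)⁻¹ * lam i = -(lam i * ∑ l, ω i l) * lam i := by
        rw [hNi]
      rw [inv_mul_cancel_right₀ (hlam i)] at h3
      rw [h3]
      simp only [hM, if_pos rfl]
      ring
    · rw [hNoff i j h, hMoff i j h]
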